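/- If a hypergram (V,H,G) admits an n-qubit Pauli assignment for some n, then |V| ≤ 2^m − 1, where m is the dimension over 𝔽₂ of the null space (kernel) of the context matrix of (V,H,G). -/

import Mathlib

open scoped Classical
open Matrix

noncomputable section

/-- The space of `n`-qubit operators, realized as matrices indexed by
`Fin n → Fin 2` (the `n`-fold tensor-product index). -/
abbrev QMat (n : ℕ) := Matrix (Fin n → Fin 2) (Fin n → Fin 2) ℂ

/-- The four Pauli matrices `I, X, Y, Z`. -/
def pauliMat : Fin 4 → Matrix (Fin 2) (Fin 2) ℂ
  | ⟨0, _⟩ => 1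
  | ⟨1, _⟩ => !![0, 1; 1, 0]
  | ⟨2, _⟩ => !![0, -Complex.I; Complex.I, 0]
  | ⟨3, _⟩ => !![1, 0; 0, -1]

/-- The `n`-fold Kronecker (tensor) product `G₁ ⊗ ⋯ ⊗ Gₙ` of the Pauli matrices
selected by `g : Fin n → Fin 4`, as a matrix indexed by `Fin n → Fin 2`. -/
def nPauli {n : ℕ} (g : Fin n → Fin 4) : QMat n :=
  Matrix.of fun r c => ∏ k, pauliMat (g k) (r k) (c k)

/-- `M` is an `n`-qubit Pauli observable. -/
def IsPauliObs (n : ℕ) (M : QMat n) : Prop := ∃ g : Fin n → Fin 4, M = nPauli g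

/-- `I^⊗n`, the `n`-fold tensor product of the identity. -/
def idN (n : ℕ) : QMat n := nPauli (fun _ => ⟨0, by omega⟩)

/-- Product of `f` over a finite set of naturals, taken in increasing order
(well-defined without commutativity; agrees with the unordered product when the
factors pairwise commute). -/
def natFinsetProd {M : Type*} [Monoid M] (s : Finset ℕ) (f : ℕ → M) : M :=
  ((s.sort (· ≤ ·)).map f).prod

/-- `(V,H,G)` is a hypergram: `V` a nonempty finite vertex set, `H` a set of
nonempty hyperedges covering `V`, `G` a set of 2-element edges on `V` forming a
simple reduced graph, no edge of `G` being contained in a hyperedge of `H`. -/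
def IsHypergram (V : Finset ℕ) (H G : Finset (Finset ℕ)) : Prop :=
  V.Nonempty ∧
  (∀ h ∈ H, h ⊆ V ∧ h.Nonempty) ∧
  (∀ v ∈ V, ∃ h ∈ H, v ∈ h) ∧
  (∀ e ∈ G, e ⊆ V ∧ e.card = 2) ∧
  (∀ v ∈ V, ∃ e ∈ G, v ∈ e) ∧
  (∀ v ∈ V, ∀ w ∈ V,
    (∀ u ∈ V, (({v, u} : Finset ℕ) ∈ G ↔ ({w, u} : Finset ℕ) ∈ G)) → v = w) ∧
  (∀ e ∈ G, ∀ h ∈ H, ¬ e ⊆ h)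

/-- `α` is an `n`-qubit Pauli assignment of the hypergram `(V,H,G)`. -/
def IsPauliAssignment (V : Finset ℕ) (H G : Finset (Finset ℕ)) (n : ℕ)
    (α : ℕ → QMat n) : Prop :=
  (∀ v ∈ V, IsPauliObs n (α v)) ∧
  (∀ v ∈ V, α v ≠ idN n) ∧
  (∀ v₁ ∈ V, ∀ v₂ ∈ V, α v₁ = α v₂ → v₁ = v₂) ∧
  (∀ v₁ ∈ V, ∀ v₂ ∈ V, v₁ ≠ v₂ →
    (α v₁ * α v₂ = -(α v₂ * α v₁) ↔ ({v₁, v₂} : Finset ℕ) ∈ G)) ∧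
  (∀ h ∈ H, natFinsetProd h α = idN n ∨ natFinsetProd h α = -(idN n))

/-- The sign `sgn_α(h) ∈ {−1,1}` of a hyperedge `h`: `∏_{v∈h} α(v) = sgn_α(h)·I^⊗n`. -/
def quantumSgn {n : ℕ} (α : ℕ → QMat n) (h : Finset ℕ) : ℤ :=
  if natFinsetProd h α = idN n then 1 else -1

/-- The sign `sgn_a(h) = ∏_{v∈h} a(v)` of a hyperedge for a classical assignment. -/
def classicalSgn (a : ℕ → ℤ) (h : Finset ℕ) : ℤ := ∏ v ∈ h, a v

/-- The contextuality degree of a Pauli assignment: the minimum over classical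
assignments `a : V → {−1,1}` of the number of hyperedges whose signs differ. -/
def contextualityDegree {n : ℕ} (H : Finset (Finset ℕ)) (α : ℕ → QMat n) : ℕ :=
  sInf { d : ℕ | ∃ a : ℕ → ℤ, (∀ v, a v = 1 ∨ a v = -1) ∧
    d = (H.filter (fun h => quantumSgn α h ≠ classicalSgn a h)).card }

/-- The context (incidence) matrix of a hypergram over 𝔽₂. -/
def contextMatrix (V : Finset ℕ) (H : Finset (Finset ℕ)) :
    Matrix {h // h ∈ H} {v // v ∈ V} (ZMod 2) :=
  Matrix.of fun h v => if v.1 ∈ h.1 then 1 else 0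

/-- The anticommutation (adjacency) matrix of a hypergram over 𝔽₂. -/
def anticommMatrix (V : Finset ℕ) (G : Finset (Finset ℕ)) :
    Matrix {v // v ∈ V} {v // v ∈ V} (ZMod 2) :=
  Matrix.of fun i j => if ({i.1, j.1} : Finset ℕ) ∈ G then 1 else 0

/-- The standard symplectic form on `𝔽₂^{2n}`:
`⟨x,y⟩ = Σ_{k=1}^{n} (x_{2k−1} y_{2k} + x_{2k} y_{2k−1})`. -/
def sympForm (n : ℕ) (x y : Fin (2 * n) → ZMod 2) : ZMod 2 :=
  ∑ k : Fin n,
    (x ⟨2 * k.1, by have := k.2; omega⟩ * y ⟨2 * k.1 + 1, by have := k.2; omega⟩ +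
     x ⟨2 * k.1 + 1, by have := k.2; omega⟩ * y ⟨2 * k.1, by have := k.2; omega⟩)

/-- The single-qubit encoding `ψ(I)=(0,0), ψ(X)=(0,1), ψ(Y)=(1,1), ψ(Z)=(1,0)`. -/
def psi4 : Fin 4 → (ZMod 2) × (ZMod 2)
  | ⟨0, _⟩ => (0, 0)
  | ⟨1, _⟩ => (0, 1)
  | ⟨2, _⟩ => (1, 1)
  | ⟨3, _⟩ => (1, 0)

/-- The encoding `ψ` of an `n`-qubit Pauli observable (given by its tensor
factors `g`) as a vector of `𝔽₂^{2n}`, concatenating the per-factor encodings. -/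
def psiVec {n : ℕ} (g : Fin n → Fin 4) : Fin (2 * n) → ZMod 2 := fun idx =>
  if idx.1 % 2 = 0 then (psi4 (g ⟨idx.1 / 2, by have := idx.2; omega⟩)).1
  else (psi4 (g ⟨idx.1 / 2, by have := idx.2; omega⟩)).2

/-- All pairs of elements of `S` commute. -/
def PairComm {n : ℕ} (S : Finset (QMat n)) : Prop := ∀ a ∈ S, ∀ b ∈ S, a * b = b * a

/-- The (well-defined) product of a finite set of pairwise commuting matrices. -/
def commProd {n : ℕ} (S : Finset (QMat n)) (h : PairComm S) : QMat n :=
  S.noncommProd id (fun a ha b hb _ => h a ha b hb)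

/-- Pairwise commutation is inherited by subsets. -/
def pairCommOfSubset {n : ℕ} {S T : Finset (QMat n)} (hST : S ⊆ T) (h : PairComm T) :
    PairComm S := fun a ha b hb => h a (hST ha) b (hST hb)

/-- `Q` (pairwise commuting) is independent: no nonempty subset has product `±I^⊗n`. -/
def IsIndep {n : ℕ} (Q : Finset (QMat n)) (hQ : PairComm Q) : Prop :=
  ∀ S : Finset (QMat n), ∀ (hS : S ⊆ Q), S.Nonempty →
    commProd S (pairCommOfSubset hS hQ) ≠ idN n ∧
    commProd S (pairCommOfSubset hS hQ) ≠ -(idN n)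

/-- The vertex set `{1, …, 15}`. -/
def V15 : Finset ℕ := Finset.Icc 1 15

/-- The 15 lines of the doily. -/
def doilyLines : Finset (Finset ℕ) :=
  { {1,2,3}, {1,8,9}, {1,10,11}, {2,4,6}, {2,5,7}, {3,12,15}, {3,13,14},
    {4,8,12}, {4,10,14}, {5,8,13}, {5,10,15}, {6,9,15}, {6,11,13},
    {7,9,14}, {7,11,12} }

/-- The 10 lines of the two-spread `H_{2s}`. -/
def twoSpreadLines : Finset (Finset ℕ) :=
  { {1,2,3}, {1,10,11}, {2,4,6}, {3,13,14}, {4,8,12}, {5,8,13}, {5,10,15},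
    {6,9,15}, {7,9,14}, {7,11,12} }

/-- The anticommutation graph `G_d = G_{2s}`: pairs of distinct vertices not on a
common doily line. -/
def doilyG : Finset (Finset ℕ) :=
  (V15.powersetCard 2).filter (fun e => ∀ h ∈ doilyLines, ¬ e ⊆ h)


/-! ### Auxiliary machinery -/

/-- Pauli multiplication table at the level of labels. -/
def mul4 (a b : Fin 4) : Fin 4 :=
  match a, b with
  | ⟨0,_⟩, ⟨0,_⟩ => 0 | ⟨0,_⟩, ⟨1,_⟩ => 1 | ⟨0,_⟩, ⟨2,_⟩ => 2 | ⟨0,_⟩, ⟨3,_⟩ => 3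
  | ⟨1,_⟩, ⟨0,_⟩ => 1 | ⟨1,_⟩, ⟨1,_⟩ => 0 | ⟨1,_⟩, ⟨2,_⟩ => 3 | ⟨1,_⟩, ⟨3,_⟩ => 2
  | ⟨2,_⟩, ⟨0,_⟩ => 2 | ⟨2,_⟩, ⟨1,_⟩ => 3 | ⟨2,_⟩, ⟨2,_⟩ => 0 | ⟨2,_⟩, ⟨3,_⟩ => 1
  | ⟨3,_⟩, ⟨0,_⟩ => 3 | ⟨3,_⟩, ⟨1,_⟩ => 2 | ⟨3,_⟩, ⟨2,_⟩ => 1 | ⟨3,_⟩, ⟨3,_⟩ => 0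

/-- Phases of Pauli products. -/
def phase4 (a b : Fin 4) : ℂ :=
  match a, b with
  | ⟨1,_⟩, ⟨2,_⟩ => Complex.I | ⟨1,_⟩, ⟨3,_⟩ => -Complex.I
  | ⟨2,_⟩, ⟨1,_⟩ => -Complex.I | ⟨2,_⟩, ⟨3,_⟩ => Complex.I
  | ⟨3,_⟩, ⟨1,_⟩ => Complex.I | ⟨3,_⟩, ⟨2,_⟩ => -Complex.I
  | _, _ => 1

lemma psi4_mul4 : ∀ a b : Fin 4, psi4 (mul4 a b) = psi4 a + psi4 b := by decide

lemma psi4_inj : Function.Injective psi4 := by decide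

@[simp] lemma phase4_00 : phase4 0 0 = 1 := rfl

@[simp] lemma phase4_01 : phase4 0 1 = 1 := rfl

@[simp] lemma phase4_02 : phase4 0 2 = 1 := rfl

@[simp] lemma phase4_03 : phase4 0 3 = 1 := rfl

@[simp] lemma phase4_10 : phase4 1 0 = 1 := rfl

@[simp] lemma phase4_11 : phase4 1 1 = 1 := rfl

@[simp] lemma phase4_12 : phase4 1 2 = Complex.I := rfl

@[simp] lemma phase4_13 : phase4 1 3 = -Complex.I := rfl

@[simp] lemma phase4_20 : phase4 2 0 = 1 := rfl

@[simp] lemma phase4_21 : phase4 2 1 = -Complex.I := rfl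

@[simp] lemma phase4_22 : phase4 2 2 = 1 := rfl

@[simp] lemma phase4_23 : phase4 2 3 = Complex.I := rfl

@[simp] lemma phase4_30 : phase4 3 0 = 1 := rfl

@[simp] lemma phase4_31 : phase4 3 1 = Complex.I := rfl

@[simp] lemma phase4_32 : phase4 3 2 = -Complex.I := rfl

@[simp] lemma phase4_33 : phase4 3 3 = 1 := rfl

lemma phase4_ne (a b : Fin 4) : phase4 a b ≠ 0 := by
  fin_cases a <;> fin_cases b <;>
    simp [Complex.I_ne_zero, neg_ne_zero]

lemma pauli_trace (a : Fin 4) (ha : a ≠ 0) :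
    pauliMat a 0 0 + pauliMat a 1 1 = 0 := by
  fin_cases a
  · simp at ha
  · simp [pauliMat]
  · simp [pauliMat]
  · simp [pauliMat]

lemma pauli_mul (a b : Fin 4) :
    pauliMat a * pauliMat b = phase4 a b • pauliMat (mul4 a b) := by
  fin_cases a <;> fin_cases b <;>
    · ext i j
      fin_cases i <;> fin_cases j <;>
        simp [pauliMat, mul4, Matrix.mul_apply, Fin.sum_univ_two,
          Matrix.one_apply] <;> ring

lemma nPauli_zero {n : ℕ} : nPauli (fun _ => (0 : Fin 4)) = (1 : QMat n) := by
  ext r c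
  simp only [nPauli, Matrix.of_apply, Matrix.one_apply]
  by_cases h : r = c
  · subst h
    simp [pauliMat, Matrix.one_apply]
  · obtain ⟨k, hk⟩ : ∃ k, r k ≠ c k := by
      by_contra hall
      push_neg at hall
      exact h (funext hall)
    rw [if_neg h]
    exact Finset.prod_eq_zero (Finset.mem_univ k) (by simp [pauliMat, Matrix.one_apply, hk])

lemma idN_eq_one (n : ℕ) : idN n = (1 : QMat n) := nPauli_zero

lemma nPauli_mul {n : ℕ} (g g' : Fin n → Fin 4) :
    nPauli g * nPauli g' =
      (∏ k, phase4 (g k) (g' k)) • nPauli (fun k => mul4 (g k) (g' k)) := by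
  ext r c
  simp only [Matrix.mul_apply, nPauli, Matrix.of_apply, Matrix.smul_apply, smul_eq_mul]
  have : ∀ m : Fin n → Fin 2,
      (∏ k, pauliMat (g k) (r k) (m k)) * ∏ k, pauliMat (g' k) (m k) (c k)
        = ∏ k, (pauliMat (g k) (r k) (m k) * pauliMat (g' k) (m k) (c k)) := by
    intro m; rw [Finset.prod_mul_distrib]
  simp only [this]
  rw [← Fintype.prod_sum fun k j => pauliMat (g k) (r k) j * pauliMat (g' k) j (c k),
    ← Finset.prod_mul_distrib]
  apply Finset.prod_congr rfl
  intro k _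
  have : ∑ j, pauliMat (g k) (r k) j * pauliMat (g' k) j (c k)
      = (pauliMat (g k) * pauliMat (g' k)) (r k) (c k) := (Matrix.mul_apply).symm
  rw [this, pauli_mul]
  simp [Matrix.smul_apply]

lemma psiVec_mul4 {n : ℕ} (g g' : Fin n → Fin 4) (j : Fin (2 * n)) :
    psiVec (fun k => mul4 (g k) (g' k)) j = psiVec g j + psiVec g' j := by
  unfold psiVec
  split_ifs <;> simp [psi4_mul4]

lemma psiVec_zero {n : ℕ} (j : Fin (2 * n)) :
    psiVec (fun _ => (0 : Fin 4)) j = 0 := by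
  unfold psiVec
  have h0 : psi4 0 = (0, 0) := by decide
  split_ifs <;> simp [h0]

lemma psiVec_inj {n : ℕ} {g g' : Fin n → Fin 4}
    (h : ∀ j, psiVec g j = psiVec g' j) : g = g' := by
  funext k
  apply psi4_inj
  have hk := k.2
  have h1 := h ⟨2 * k.1, by omega⟩
  have h2 := h ⟨2 * k.1 + 1, by omega⟩
  unfold psiVec at h1 h2
  simp only [Nat.mul_mod_right, Nat.mul_div_cancel_left _ (by norm_num : (0:ℕ) < 2)] at h1 h2
  have e0 : (2 * k.1) % 2 = 0 := by omega
  have e1 : (2 * k.1 + 1) % 2 = 1 := by omega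
  have d0 : (2 * k.1) / 2 = k.1 := by omega
  have d1 : (2 * k.1 + 1) / 2 = k.1 := by omega
  simp only [e0, e1, d0, d1, if_true, if_false] at h1 h2
  have hk' : (⟨k.1, hk⟩ : Fin n) = k := rfl
  simp only [hk'] at h1 h2
  exact Prod.ext (by simpa using h1) (by simpa using h2)

/-- Products of lists of `nPauli`s are nonzero multiples of an `nPauli` whose
`psiVec` is the sum of the `psiVec`s. -/
lemma list_prod_pauli {n : ℕ} (gs : List (Fin n → Fin 4)) :
    ∃ c : ℂ, c ≠ 0 ∧ ∃ G : Fin n → Fin 4,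
      (gs.map nPauli).prod = c • nPauli G ∧
      ∀ j, psiVec G j = (gs.map (fun g => psiVec g j)).sum := by
  induction gs with
  | nil =>
      refine ⟨1, one_ne_zero, fun _ => 0, ?_, ?_⟩
      · simp [nPauli_zero]
      · intro j; simp [psiVec_zero]
  | cons g gs ih =>
      obtain ⟨c, hc, G, hprod, hsum⟩ := ih
      refine ⟨(∏ k, phase4 (g k) (G k)) * c, ?_, fun k => mul4 (g k) (G k), ?_, ?_⟩
      · exact mul_ne_zero (Finset.prod_ne_zero_iff.mpr fun k _ => phase4_ne _ _) hc
      · rw [List.map_cons, List.prod_cons, hprod, Matrix.mul_smul, nPauli_mul,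
          smul_smul, mul_comm c]
      · intro j
        rw [List.map_cons, List.sum_cons, psiVec_mul4, hsum]

lemma nPauli_scalar_id {n : ℕ} {G : Fin n → Fin 4} {c d : ℂ} (hc : c ≠ 0) (hd : d ≠ 0)
    (h : c • nPauli G = d • (1 : QMat n)) : G = fun _ => 0 := by
  funext k0
  by_contra hk0
  set r0 : Fin n → Fin 2 := Function.update (fun _ => 0) k0 0 with hr0
  set r1 : Fin n → Fin 2 := Function.update (fun _ => 0) k0 1 with hr1
  have key : ∀ r : Fin n → Fin 2, c * ∏ k, pauliMat (G k) (r k) (r k) = d := by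
    intro r
    have := congrArg (fun M : QMat n => M r r) h
    simpa [nPauli, Matrix.smul_apply, Matrix.one_apply] using this
  have h0 := key r0
  have h1 := key r1
  have split0 : ∏ k, pauliMat (G k) (r0 k) (r0 k)
      = pauliMat (G k0) 0 0 * ∏ k ∈ Finset.univ.erase k0, pauliMat (G k) (r0 k) (r0 k) := by
    rw [← Finset.mul_prod_erase Finset.univ _ (Finset.mem_univ k0)]
    simp [hr0]
  have split1 : ∏ k, pauliMat (G k) (r1 k) (r1 k)
      = pauliMat (G k0) 1 1 * ∏ k ∈ Finset.univ.erase k0, pauliMat (G k) (r1 k) (r1 k) := by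
    rw [← Finset.mul_prod_erase Finset.univ _ (Finset.mem_univ k0)]
    simp [hr1]
  have same : ∏ k ∈ Finset.univ.erase k0, pauliMat (G k) (r1 k) (r1 k)
      = ∏ k ∈ Finset.univ.erase k0, pauliMat (G k) (r0 k) (r0 k) := by
    apply Finset.prod_congr rfl
    intro k hk
    have : k ≠ k0 := (Finset.mem_erase.mp hk).1
    simp [hr0, hr1, Function.update_of_ne this]
  have tr := pauli_trace (G k0) hk0
  rw [split0] at h0
  rw [split1, same] at h1
  have hsum : c * ((pauliMat (G k0) 0 0 + pauliMat (G k0) 1 1)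
        * ∏ k ∈ Finset.univ.erase k0, pauliMat (G k) (r0 k) (r0 k)) = d + d := by
      rw [add_mul, mul_add, h0, h1]
  have h2 : d + d = 0 := by
    rw [tr, zero_mul, mul_zero] at hsum
    exact hsum.symm
  have h3 : (2 : ℂ) * d = 0 := by linear_combination h2
  rcases mul_eq_zero.mp h3 with hx | hx
  · exact absurd hx two_ne_zero
  · exact hd hx

lemma sort_map_sum {M : Type*} [AddCommMonoid M] (s : Finset ℕ) (f : ℕ → M) :
    ((s.sort (· ≤ ·)).map f).sum = ∑ v ∈ s, f v := by
  rw [List.Perm.sum_eq (List.Perm.map f (Finset.sort_perm_toList (s := s) (r := (· ≤ ·)))),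
    Finset.sum_map_toList]

lemma hyperedge_psi_sum {n : ℕ} (α : ℕ → QMat n) (gfun : ℕ → Fin n → Fin 4)
    (h : Finset ℕ) (hα : ∀ v ∈ h, α v = nPauli (gfun v))
    (hprod : natFinsetProd h α = idN n ∨ natFinsetProd h α = -(idN n)) :
    ∀ j, ∑ v ∈ h, psiVec (gfun v) j = 0 := by
  set L := h.sort (· ≤ ·) with hL
  have hmap : L.map α = (L.map gfun).map nPauli := by
    rw [List.map_map]
    apply List.map_congr_left
    intro v hv
    exact hα v ((Finset.mem_sort _).mp hv)
  obtain ⟨c, hc, G, hGprod, hGsum⟩ := list_prod_pauli (L.map gfun)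
  have hnat : natFinsetProd h α = c • nPauli G := by
    rw [natFinsetProd, ← hL, hmap, hGprod]
  have hG0 : G = fun _ => 0 := by
    rcases hprod with hp | hp <;> rw [hnat] at hp
    · exact nPauli_scalar_id hc one_ne_zero
        (by rw [hp, idN_eq_one, one_smul])
    · refine nPauli_scalar_id hc (c := c) (d := -1) (by norm_num) ?_
      rw [hp, idN_eq_one, neg_smul, one_smul]
  intro j
  have := hGsum j
  rw [hG0, psiVec_zero, List.map_map] at this
  have : ((L.map fun v => psiVec (gfun v) j)).sum = 0 := this.symm
  rw [← sort_map_sum h (fun v => psiVec (gfun v) j), ← hL]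
  exact this

theorem assignable_card_le'
    (V : Finset ℕ) (H G : Finset (Finset ℕ)) (hgram : IsHypergram V H G)
    (hassign : ∃ n, ∃ α : ℕ → QMat n, IsPauliAssignment V H G n α) :
    V.card ≤
      2 ^ (Module.finrank (ZMod 2) (LinearMap.ker (contextMatrix V H).mulVecLin)) - 1 := by
  obtain ⟨n, α, hobs, hne, hinj, hanti, hH⟩ := hassign
  set K := LinearMap.ker (contextMatrix V H).mulVecLin with hK
  set m := Module.finrank (ZMod 2) K with hm
  -- choose tensor decompositions
  have hgfun : ∃ gfun : ℕ → Fin n → Fin 4, ∀ v ∈ V, α v = nPauli (gfun v) := by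
    choose gf hgf using fun (v : {v // v ∈ V}) => hobs v.1 v.2
    refine ⟨fun v => if hv : v ∈ V then gf ⟨v, hv⟩ else fun _ => 0, fun v hv => ?_⟩
    simp only [dif_pos hv]
    exact hgf ⟨v, hv⟩
  obtain ⟨gfun, hgfun⟩ := hgfun
  -- the kernel vectors coming from the symplectic encoding
  have hker : ∀ j : Fin (2 * n),
      (fun v : {v // v ∈ V} => psiVec (gfun v.1) j) ∈ K := by
    intro j
    rw [hK, LinearMap.mem_ker]
    funext h'
    have hsub : h'.1 ⊆ V := (hgram.2.1 h'.1 h'.2).1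
    have hsum := hyperedge_psi_sum α gfun h'.1
      (fun v hv => hgfun v (hsub hv)) (hH h'.1 h'.2) j
    calc (contextMatrix V H).mulVecLin (fun v : {v // v ∈ V} => psiVec (gfun v.1) j) h'
        = ∑ v : {v // v ∈ V}, (if v.1 ∈ h'.1 then 1 else 0) * psiVec (gfun v.1) j := by
          simp [Matrix.mulVecLin_apply, Matrix.mulVec, dotProduct, contextMatrix]
      _ = ∑ v : {v // v ∈ V}, (if v.1 ∈ h'.1 then psiVec (gfun v.1) j else 0) := by
          apply Finset.sum_congr rfl; intro v _; split_ifs <;> simp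
      _ = ∑ v ∈ V, (if v ∈ h'.1 then psiVec (gfun v) j else 0) := by
          rw [Finset.univ_eq_attach, Finset.sum_attach V
            (fun v => if v ∈ h'.1 then psiVec (gfun v) j else 0)]
      _ = ∑ v ∈ h'.1, psiVec (gfun v) j := by
          rw [Finset.sum_ite_mem, Finset.inter_eq_right.mpr hsub]
      _ = 0 := hsum
  -- basis of the kernel and the evaluation maps
  have : Module.Finite (ZMod 2) K := by infer_instance
  let b : Module.Basis (Fin m) (ZMod 2) K := Module.finBasis (ZMod 2) K
  have eval_eq : ∀ (x : K) (v : {v // v ∈ V}),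
      (x : {v // v ∈ V} → ZMod 2) v = ∑ i, b.repr x i * ((b i : {v // v ∈ V} → ZMod 2) v) := by
    intro x v
    conv_lhs => rw [← b.sum_repr x]
    simp only [Submodule.coe_sum, Finset.sum_apply, Submodule.coe_smul, Pi.smul_apply, smul_eq_mul]
  let Φ : {v // v ∈ V} → (Fin m → ZMod 2) := fun v i => (b i : {v // v ∈ V} → ZMod 2) v
  have hΦne : ∀ v, Φ v ≠ 0 := by
    intro v hv0
    have hzero : ∀ x : K, (x : {v // v ∈ V} → ZMod 2) v = 0 := by
      intro x
      rw [eval_eq x v]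
      apply Finset.sum_eq_zero
      intro i _
      have : Φ v i = 0 := by rw [hv0]; rfl
      simp only [Φ] at this
      rw [this, mul_zero]
    have hpsi : ∀ j, psiVec (gfun v.1) j = 0 := fun j => hzero ⟨_, hker j⟩
    have : gfun v.1 = fun _ => 0 :=
      psiVec_inj (fun j => by rw [hpsi j, psiVec_zero])
    exact hne v.1 v.2 (by rw [hgfun v.1 v.2, this, nPauli_zero, ← idN_eq_one])
  have hΦinj : Function.Injective Φ := by
    intro v w hvw
    have heq : ∀ x : K, (x : {v // v ∈ V} → ZMod 2) v = (x : {v // v ∈ V} → ZMod 2) w := by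
      intro x
      rw [eval_eq x v, eval_eq x w]
      apply Finset.sum_congr rfl
      intro i _
      have : Φ v i = Φ w i := by rw [hvw]
      simp only [Φ] at this
      rw [this]
    have hpsi : ∀ j, psiVec (gfun v.1) j = psiVec (gfun w.1) j :=
      fun j => heq ⟨_, hker j⟩
    have hg : gfun v.1 = gfun w.1 := psiVec_inj hpsi
    have : α v.1 = α w.1 := by rw [hgfun v.1 v.2, hgfun w.1 w.2, hg]
    exact Subtype.ext (hinj v.1 v.2 w.1 w.2 this)
  -- cardinality count
  let Φ' : {v // v ∈ V} → {f : Fin m → ZMod 2 // f ≠ 0} := fun v => ⟨Φ v, hΦne v⟩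
  have hΦ'inj : Function.Injective Φ' := fun v w h =>
    hΦinj (congrArg Subtype.val h)
  have hcardle := Fintype.card_le_of_injective Φ' hΦ'inj
  have h1 : Fintype.card {v // v ∈ V} = V.card := Fintype.card_coe V
  have h2 : Fintype.card {f : Fin m → ZMod 2 // f ≠ 0} = 2 ^ m - 1 := by
    have := Fintype.card_subtype_compl (fun f : Fin m → ZMod 2 => f = 0)
    simp only [Fintype.card_subtype_eq (0 : Fin m → ZMod 2)] at this
    calc Fintype.card {f : Fin m → ZMod 2 // f ≠ 0}
        = Fintype.card {f : Fin m → ZMod 2 // ¬ f = 0} := rfl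
      _ = Fintype.card (Fin m → ZMod 2) - 1 := this
      _ = 2 ^ m - 1 := by simp [Fintype.card_fun]
  rw [h1, h2] at hcardle
  exact hcardle

/-- For an assignable hypergram, `|V| ≤ 2^m − 1` where `m` is the
dimension of the null space of the context matrix over 𝔽₂. -/
theorem assignable_card_le
    (V : Finset ℕ) (H G : Finset (Finset ℕ)) (hgram : IsHypergram V H G)
    (hassign : ∃ n, ∃ α : ℕ → QMat n, IsPauliAssignment V H G n α) :
    V.card ≤
      2 ^ (Module.finrank (ZMod 2) (LinearMap.ker (contextMatrix V H).mulVecLin)) - 1 := by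
  exact assignable_card_le' V H G hgram hassign

end
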